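/- Let σ > 0, n ≥ 1, and let x, w ∈ ℝⁿ with x ≠ 0. Then ∫_{ℝⁿ} sign(⟨t, x⟩) · k_σ(w − t) dt = erf( ⟨w, x⟩ / (√2 σ ‖x‖) ), where ⟨·,·⟩ denotes the Euclidean inner product and sign(y) = 1 for y > 0, sign(y) = −1 for y < 0, and sign(0) = 0. -/

import Mathlib

open MeasureTheory
open scoped RealInnerProductSpace

/-- Isotropic Gaussian kernel on `ℝⁿ`: `k_σ(x) = (√(2π) σ)^{-n} exp(−‖x‖²/(2σ²))`. -/
noncomputable def gaussKernel (σ : ℝ) {n : ℕ} (x : EuclideanSpace ℝ (Fin n)) : ℝ :=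
  ((Real.sqrt (2 * Real.pi) * σ)⁻¹) ^ n * Real.exp (-‖x‖ ^ 2 / (2 * σ ^ 2))

/-- The error function `erf(x) = (2/√π) ∫₀ˣ e^{−t²} dt`. -/
noncomputable def erf (x : ℝ) : ℝ :=
  (2 / Real.sqrt Real.pi) * ∫ t in (0 : ℝ)..x, Real.exp (-t ^ 2)

open Set

lemma g_integrable (σ : ℝ) (hσ : 0 < σ) :
    Integrable (fun a : ℝ => (Real.sqrt (2 * Real.pi) * σ)⁻¹ * Real.exp (-a ^ 2 / (2 * σ ^ 2))) := by
  have h : (0:ℝ) < (2 * σ ^ 2)⁻¹ := by positivity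
  have := (integrable_exp_neg_mul_sq h).const_mul (Real.sqrt (2 * Real.pi) * σ)⁻¹
  convert this using 2 with a
  rw [neg_div, div_eq_inv_mul, neg_mul]

lemma g_total (σ : ℝ) (hσ : 0 < σ) :
    (∫ a : ℝ, (Real.sqrt (2 * Real.pi) * σ)⁻¹ * Real.exp (-a ^ 2 / (2 * σ ^ 2))) = 1 := by
  have h : (0:ℝ) < (2 * σ ^ 2)⁻¹ := by positivity
  rw [integral_const_mul]
  have h2 : (∫ a : ℝ, Real.exp (-a ^ 2 / (2 * σ ^ 2)))
      = ∫ a : ℝ, Real.exp (-((2 * σ ^ 2)⁻¹) * a ^ 2) := by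
    congr 1 with a; rw [neg_div, div_eq_inv_mul, neg_mul]
  rw [h2, integral_gaussian]
  have h3 : Real.sqrt (2 * Real.pi * σ ^ 2) = Real.sqrt (2 * Real.pi) * σ := by
    rw [Real.sqrt_mul (by positivity), Real.sqrt_sq hσ.le]
  rw [show Real.pi / (2 * σ ^ 2)⁻¹ = 2 * Real.pi * σ ^ 2 by field_simp, h3,
    inv_mul_cancel₀ (by positivity)]

lemma oneD (σ : ℝ) (hσ : 0 < σ) (r c : ℝ) (hr : 0 < r) :
    (∫ a : ℝ, Real.sign (c - r * a) *
        ((Real.sqrt (2 * Real.pi) * σ)⁻¹ * Real.exp (-a ^ 2 / (2 * σ ^ 2))))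
      = erf (c / (Real.sqrt 2 * σ * r)) := by
  set g : ℝ → ℝ := fun a => (Real.sqrt (2 * Real.pi) * σ)⁻¹ * Real.exp (-a ^ 2 / (2 * σ ^ 2))
    with hgdef
  have gint : Integrable g := g_integrable σ hσ
  have gtot : (∫ a : ℝ, g a) = 1 := g_total σ hσ
  set m : ℝ := c / r with hm
  have hpt : ∀ a : ℝ, Real.sign (c - r * a) * g a
      = (Iio m).indicator g a - (Ioi m).indicator g a := by
    intro a
    rcases lt_trichotomy a m with h | h | h
    · have h1 : 0 < c - r * a := by
        have : r * a < c := by rw [hm, lt_div_iff₀ hr, mul_comm] at h; exact h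
        linarith
      rw [Real.sign_of_pos h1, indicator_of_mem (mem_Iio.2 h),
        indicator_of_notMem (by simp [mem_Ioi]; linarith), one_mul, sub_zero]
    · have h1 : c - r * a = 0 := by rw [h, hm]; field_simp; ring
      rw [h1, Real.sign_zero, zero_mul, h,
        indicator_of_notMem (by simp), indicator_of_notMem (by simp), sub_zero]
    · have h1 : c - r * a < 0 := by
        have : c < r * a := by rw [hm, div_lt_iff₀ hr, mul_comm] at h; exact h
        linarith
      rw [Real.sign_of_neg h1, indicator_of_notMem (by simp [mem_Iio]; linarith),
        indicator_of_mem (mem_Ioi.2 h), neg_one_mul, zero_sub]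
  have step1 : (∫ a : ℝ, Real.sign (c - r * a) * g a)
      = (∫ a in Iio m, g a) - ∫ a in Ioi m, g a := by
    rw [show (fun a : ℝ => Real.sign (c - r * a) * g a)
        = fun a => (Iio m).indicator g a - (Ioi m).indicator g a from funext hpt]
    rw [integral_sub (gint.indicator measurableSet_Iio) (gint.indicator measurableSet_Ioi),
      integral_indicator measurableSet_Iio, integral_indicator measurableSet_Ioi]
  have hcompl : (∫ a in Iic m, g a) + ∫ a in Ioi m, g a = 1 := by
    have := integral_add_compl (measurableSet_Iic (a := m)) gint
    rwa [compl_Iic, gtot] at this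
  have heven : ∀ a : ℝ, g (-a) = g a := by intro a; simp [hgdef, neg_sq]
  have half : (∫ a in Iic (0:ℝ), g a) = 1 / 2 := by
    have h1 : (∫ a in Iic (0:ℝ), g a) = ∫ a in Ioi (-(0:ℝ)), g a := by
      rw [← integral_comp_neg_Iic (0:ℝ) g]
      simp only [heven]
    rw [neg_zero] at h1
    have h2 : (∫ a in Iic (0:ℝ), g a) + ∫ a in Ioi (0:ℝ), g a = 1 := by
      have := integral_add_compl (measurableSet_Iic (a := (0:ℝ))) gint
      rwa [compl_Iic, gtot] at this
    linarith
  have hIic : (∫ a in Iic m, g a) = 1 / 2 + ∫ a in (0:ℝ)..m, g a := by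
    have := intervalIntegral.integral_Iic_sub_Iic (gint.integrableOn (s := Iic (0:ℝ)))
      (gint.integrableOn (s := Iic m))
    rw [half] at this; linarith
  have key : (∫ a : ℝ, Real.sign (c - r * a) * g a) = 2 * ∫ a in (0:ℝ)..m, g a := by
    rw [step1, integral_Iic_eq_integral_Iio.symm, hIic]
    have : (∫ a in Ioi m, g a) = 1 - ∫ a in Iic m, g a := by linarith
    rw [this, hIic]; ring
  rw [key]
  -- now compute 2 * ∫_0^m g = erf (m / (√2 σ)) and identify the argument
  have harg : m / (Real.sqrt 2 * σ) = c / (Real.sqrt 2 * σ * r) := by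
    rw [hm, div_div, mul_comm r]
  have hk : (Real.sqrt 2 * σ) ≠ 0 := by positivity
  have hsub : (∫ a in (0:ℝ)..m, Real.exp (-a ^ 2 / (2 * σ ^ 2)))
      = (Real.sqrt 2 * σ) * ∫ t in (0:ℝ)..(m / (Real.sqrt 2 * σ)), Real.exp (-t ^ 2) := by
    have h1 : ∀ t : ℝ, Real.exp (-(Real.sqrt 2 * σ * t) ^ 2 / (2 * σ ^ 2))
        = Real.exp (-t ^ 2) := by
      intro t
      congr 1
      rw [mul_pow, mul_pow, Real.sq_sqrt (by norm_num : (0:ℝ) ≤ 2)]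
      field_simp
    have h2 := intervalIntegral.integral_comp_mul_left
      (f := fun a : ℝ => Real.exp (-a ^ 2 / (2 * σ ^ 2))) (a := (0:ℝ))
      (b := m / (Real.sqrt 2 * σ)) (c := Real.sqrt 2 * σ) hk
    rw [mul_zero, mul_div_cancel₀ _ hk] at h2
    simp only [h1] at h2
    rw [h2, smul_eq_mul, ← mul_assoc, mul_inv_cancel₀ hk, one_mul]
  rw [hgdef]
  simp only []
  rw [intervalIntegral.integral_const_mul, hsub, erf, harg.symm]
  have hsqrt : Real.sqrt (2 * Real.pi) = Real.sqrt 2 * Real.sqrt Real.pi :=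
    Real.sqrt_mul (by norm_num) _
  rw [hsqrt]
  have hpi : Real.sqrt Real.pi ≠ 0 := by positivity
  have h2 : Real.sqrt 2 ≠ 0 := by positivity
  field_simp

theorem gaussian_smoothing_sign_linear (σ : ℝ) (hσ : 0 < σ) (n : ℕ) (hn : 1 ≤ n)
    (x w : EuclideanSpace ℝ (Fin n)) (hx : x ≠ 0) :
    (∫ t : EuclideanSpace ℝ (Fin n), Real.sign ⟪t, x⟫ * gaussKernel σ (w - t)) =
      erf (⟪w, x⟫ / (Real.sqrt 2 * σ * ‖x‖)) := by
  classical
  have hr : 0 < ‖x‖ := norm_pos_iff.mpr hx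
  set c : ℝ := ⟪w, x⟫ with hc
  set i0 : Fin n := ⟨0, hn⟩ with hi0
  set u : EuclideanSpace ℝ (Fin n) := ‖x‖⁻¹ • x with hu
  have hun : ‖u‖ = 1 := by
    rw [hu, norm_smul, Real.norm_eq_abs, abs_of_pos (inv_pos.2 hr), inv_mul_cancel₀ hr.ne']
  set e0 : EuclideanSpace ℝ (Fin n) := EuclideanSpace.single i0 (1 : ℝ) with he0def
  have he0n : ‖e0‖ = 1 := by rw [he0def, EuclideanSpace.norm_single, norm_one]
  set e : EuclideanSpace ℝ (Fin n) ≃ₗᵢ[ℝ] EuclideanSpace ℝ (Fin n) :=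
    Submodule.reflection (ℝ ∙ (u - e0))ᗮ with hedef
  have heu : e u = e0 := Submodule.reflection_sub (hun.trans he0n.symm)
  have hxu : x = ‖x‖ • u := by
    rw [hu, smul_smul, mul_inv_cancel₀ hr.ne', one_smul]
  have hinner : ∀ s : EuclideanSpace ℝ (Fin n), ⟪s, x⟫ = ‖x‖ * (e s) i0 := by
    intro s
    have h1 : ⟪e s, e u⟫ = ⟪s, u⟫ := e.inner_map_map s u
    have h3 : ⟪s, u⟫ = (e s) i0 := by
      rw [← h1, heu, he0def, EuclideanSpace.inner_single_right]; simp
    have h2 : ⟪s, u⟫ = ‖x‖⁻¹ * ⟪s, x⟫ := by rw [hu, real_inner_smul_right]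
    rw [← h3, h2, ← mul_assoc, mul_inv_cancel₀ hr.ne', one_mul]
  have hker : ∀ s : EuclideanSpace ℝ (Fin n), gaussKernel σ s = gaussKernel σ (e s) := by
    intro s; simp only [gaussKernel, e.norm_map]
  set g : ℝ → ℝ := fun a => (Real.sqrt (2 * Real.pi) * σ)⁻¹ * Real.exp (-a ^ 2 / (2 * σ ^ 2))
    with hgdef
  set f : Fin n → ℝ → ℝ :=
    fun i a => (if i = i0 then Real.sign (c - ‖x‖ * a) else 1) * g a with hfdef
  set H : EuclideanSpace ℝ (Fin n) → ℝ :=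
    fun y => Real.sign (c - ‖x‖ * y i0) * gaussKernel σ y with hHdef
  have step1 : (∫ t : EuclideanSpace ℝ (Fin n), Real.sign ⟪t, x⟫ * gaussKernel σ (w - t))
      = ∫ s : EuclideanSpace ℝ (Fin n), Real.sign (c - ⟪s, x⟫) * gaussKernel σ s := by
    rw [show (fun t : EuclideanSpace ℝ (Fin n) => Real.sign ⟪t, x⟫ * gaussKernel σ (w - t))
        = fun t => (fun s => Real.sign (c - ⟪s, x⟫) * gaussKernel σ s) (w - t) by
      funext t
      simp only [hc, inner_sub_left, sub_sub_cancel]]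
    exact integral_sub_left_eq_self
      (fun s : EuclideanSpace ℝ (Fin n) => Real.sign (c - ⟪s, x⟫) * gaussKernel σ s) volume w
  have step2 : (∫ s : EuclideanSpace ℝ (Fin n), Real.sign (c - ⟪s, x⟫) * gaussKernel σ s)
      = ∫ y : EuclideanSpace ℝ (Fin n), H y := by
    rw [show (fun s : EuclideanSpace ℝ (Fin n) => Real.sign (c - ⟪s, x⟫) * gaussKernel σ s)
        = fun s => H (e s) by
      funext s
      simp only [hHdef, hinner s, hker s]]
    exact e.measurePreserving.integral_comp' (f := e.toMeasurableEquiv) H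
  have step3 : (∫ y : EuclideanSpace ℝ (Fin n), H y)
      = ∫ z : Fin n → ℝ, H ((MeasurableEquiv.toLp 2 (Fin n → ℝ)) z) :=
    (((EuclideanSpace.volume_preserving_symm_measurableEquiv_toLp (Fin n)).symm
      (MeasurableEquiv.toLp 2 (Fin n → ℝ)).symm).integral_comp' H).symm
  have hHz : ∀ z : Fin n → ℝ,
      H ((MeasurableEquiv.toLp 2 (Fin n → ℝ)) z) = ∏ i, f i (z i) := by
    intro z
    have hnorm : ‖(MeasurableEquiv.toLp 2 (Fin n → ℝ)) z‖ ^ 2 = ∑ i, (z i) ^ 2 := by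
      rw [EuclideanSpace.norm_eq, Real.sq_sqrt (by positivity)]
      simp only [Real.norm_eq_abs, sq_abs]
      rfl
    have happ : ((MeasurableEquiv.toLp 2 (Fin n → ℝ)) z) i0 = z i0 := rfl
    simp only [hHdef, gaussKernel, hnorm, happ, hfdef]
    rw [Finset.prod_mul_distrib, Finset.prod_ite_eq' Finset.univ i0
      (fun i => Real.sign (c - ‖x‖ * z i))]
    simp only [Finset.mem_univ, if_true]
    have hprod : (∏ i, g (z i))
        = ((Real.sqrt (2 * Real.pi) * σ)⁻¹) ^ n * Real.exp (-(∑ i, (z i) ^ 2) / (2 * σ ^ 2)) := by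
      simp only [hgdef]
      rw [Finset.prod_mul_distrib, Finset.prod_const, Finset.card_univ, Fintype.card_fin,
        ← Real.exp_sum]
      congr 1
      simp [neg_div, Finset.sum_div, Finset.sum_neg_distrib]
    rw [hprod]
  have hfi : ∀ i, (∫ a : ℝ, f i a) = if i = i0 then erf (c / (Real.sqrt 2 * σ * ‖x‖)) else 1 := by
    intro i
    by_cases h : i = i0
    · simp only [hfdef, h, if_true]
      exact oneD σ hσ ‖x‖ c hr
    · simp only [hfdef, h, if_false, one_mul]
      exact g_total σ hσ
  calc (∫ t : EuclideanSpace ℝ (Fin n), Real.sign ⟪t, x⟫ * gaussKernel σ (w - t))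
      = ∫ z : Fin n → ℝ, ∏ i, f i (z i) := by
        rw [step1, step2, step3]; exact integral_congr_ae (Filter.Eventually.of_forall hHz)
    _ = ∏ i, ∫ a : ℝ, f i a := MeasureTheory.integral_fintype_prod_eq_prod f
    _ = erf (c / (Real.sqrt 2 * σ * ‖x‖)) := by
        rw [show (fun i => ∫ a : ℝ, f i a)
            = fun i => if i = i0 then erf (c / (Real.sqrt 2 * σ * ‖x‖)) else 1 from funext hfi]
        rw [Finset.prod_ite_eq' Finset.univ i0
          (fun _ => erf (c / (Real.sqrt 2 * σ * ‖x‖)))]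
        simp
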